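/- Let λ be a nonzero complex number and set x = λ + conj(λ)/λ + 1/conj(λ). Then |x|² − 4·Re(x·λ/conj(λ)) + 3 = (|λ|² + 1)·|λ² − conj(λ)|² / |λ|⁴. Moreover, this quantity equals 0 if and only if λ³ = 1. -/

import Mathlib

set_option maxRecDepth 4000 in
theorem denominator_identity (l : ℂ) (hl : l ≠ 0) (x : ℂ)
    (hx : x = l + (starRingEnd ℂ) l / l + 1 / (starRingEnd ℂ) l) :
    ‖x‖ ^ 2 - 4 * (x * l / (starRingEnd ℂ) l).re + 3 =
      (‖l‖ ^ 2 + 1) * ‖l ^ 2 - (starRingEnd ℂ) l‖ ^ 2 /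
        ‖l‖ ^ 4 ∧
    (‖x‖ ^ 2 - 4 * (x * l / (starRingEnd ℂ) l).re + 3 = 0 ↔ l ^ 3 = 1) := by
  have h1 : ‖x‖ ^ 2 - 4 * (x * l / (starRingEnd ℂ) l).re + 3 =
      (‖l‖ ^ 2 + 1) * ‖l ^ 2 - (starRingEnd ℂ) l‖ ^ 2 /
        ‖l‖ ^ 4 := by
    subst hx
    have hns : Complex.normSq l ≠ 0 := by simpa using hl
    have h4 : ‖l‖ ^ 4 = Complex.normSq l ^ 2 := by
      rw [show (4:ℕ) = 2*2 from rfl, pow_mul, Complex.sq_norm]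
    simp only [Complex.sq_norm]
    rw [h4, sq l]
    obtain ⟨a, b⟩ := l
    have hab : a^2 + b^2 ≠ 0 := by simpa [Complex.normSq_apply, sq] using hns
    simp only [Complex.normSq_apply, Complex.div_re, Complex.add_re, Complex.add_im,
      Complex.mul_re, Complex.mul_im, Complex.div_im, Complex.one_re, Complex.one_im,
      Complex.sub_re, Complex.sub_im, Complex.conj_re, Complex.conj_im]
    have hab2 : a ^ 2 * b ^ 2 * 2 + a ^ 4 + b ^ 4 ≠ 0 := by
      intro h; apply hab; nlinarith [sq_nonneg a, sq_nonneg b, sq_nonneg (a^2+b^2)]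
    have hab3 : a * a + b * b ≠ 0 := by simpa [sq] using hab
    have hab4 : a * a + -b * -b ≠ 0 := by simpa [sq] using hab
    field_simp
    ring
  have hiff : l ^ 2 = (starRingEnd ℂ) l ↔ l ^ 3 = 1 := by
    constructor
    · intro h
      have habs : ‖l‖ ^ 2 = ‖l‖ := by
        conv_rhs => rw [← Complex.norm_conj, ← h]
        rw [norm_pow]
      have h0 : ‖l‖ ≠ 0 := by simpa using hl
      have h1 : ‖l‖ = 1 :=
        mul_left_cancel₀ h0 (by rw [mul_one, ← sq]; exact habs)
      have hns : (Complex.normSq l : ℂ) = 1 := by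
        rw [← Complex.sq_norm, h1]; norm_num
      calc l ^ 3 = l * l ^ 2 := by ring
      _ = l * (starRingEnd ℂ) l := by rw [h]
      _ = (Complex.normSq l : ℂ) := by rw [Complex.mul_conj]
      _ = 1 := hns
    · intro h
      have h1 : ‖l‖ = 1 := by
        have : ‖l‖ ^ 3 = 1 := by rw [← norm_pow, h, norm_one]
        nlinarith [norm_nonneg l, this, sq_nonneg (‖l‖ - 1),
          sq_nonneg (‖l‖ + 1)]
      have hmc : l * (starRingEnd ℂ) l = 1 := by
        rw [Complex.mul_conj, ← Complex.sq_norm, h1]; norm_num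
      have : l * l ^ 2 = l * (starRingEnd ℂ) l := by rw [hmc, ← h]; ring
      exact (mul_left_cancel₀ hl this)
  refine ⟨h1, ?_⟩
  rw [h1]
  have habs4 : ‖l‖ ^ 4 ≠ 0 := by simpa using hl
  have hpos : (0:ℝ) < ‖l‖ ^ 2 + 1 := by positivity
  rw [div_eq_zero_iff, or_iff_left habs4, mul_eq_zero, or_iff_right hpos.ne',
    pow_eq_zero_iff (two_ne_zero), norm_eq_zero, sub_eq_zero]
  exact hiff
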